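/- Let m be an even positive integer and let W_m^{−1}: {0,...,m−1} → {0,...,m−1} be given by W_m^{−1}(y) = y/2 if y is even and W_m^{−1}(y) = m − (y+1)/2 if y is odd. Then the m−1 first-order differences (W_m^{−1}(y+1) − W_m^{−1}(y)) mod m, for y = 0,1,...,m−2, are pairwise distinct and form exactly the set {1,2,...,m−1}. -/
import Mathlib


/-- The inverse Williams transformation on `{0,…,m-1}`:
`W⁻¹(y) = y/2` if `y` is even, `W⁻¹(y) = m - (y+1)/2` if `y` is odd. -/
def WinvM (m y : ℕ) : ℕ :=
  if y % 2 = 0 then y / 2 else m - (y + 1) / 2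

lemma winv_diff (m y : ℕ) (hm : Even m) (hy : y < m - 1) :
    (WinvM m (y + 1) + m - WinvM m y) % m =
      if y % 2 = 0 then m - 1 - y else y + 1 := by
  obtain ⟨k, hk⟩ := hm
  unfold WinvM
  rcases Nat.even_or_odd y with h | h
  · obtain ⟨j, hj⟩ := h
    have h1 : y % 2 = 0 := by omega
    rw [if_neg (by omega : ¬ (y + 1) % 2 = 0), if_pos h1, if_pos h1]
    have e : (m - (y + 1 + 1) / 2 + m - y / 2) = m + (m - 1 - y) := by omega
    rw [e, Nat.add_mod_left, Nat.mod_eq_of_lt (by omega)]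
  · obtain ⟨j, hj⟩ := h
    have h1 : ¬ y % 2 = 0 := by omega
    rw [if_pos (by omega : (y + 1) % 2 = 0), if_neg h1, if_neg h1]
    have e : ((y + 1) / 2 + m - (m - (y + 1) / 2)) = y + 1 := by omega
    rw [e, Nat.mod_eq_of_lt (by omega)]

/-- for an even positive integer `m`, the `m - 1` first-order
differences `(W⁻¹(y+1) - W⁻¹(y)) mod m`, `y = 0,…,m-2`, are pairwise distinct and
form exactly the set `{1,…,m-1}`. -/
theorem stmt_11 (m : ℕ) (hm : 0 < m) (heven : Even m) :
    Set.InjOn (fun y => (WinvM m (y + 1) + m - WinvM m y) % m) (Finset.range (m - 1)) ∧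
    Finset.image (fun y => (WinvM m (y + 1) + m - WinvM m y) % m) (Finset.range (m - 1)) =
      Finset.Icc 1 (m - 1) := by
  obtain ⟨k, hk⟩ := heven
  have hinj : Set.InjOn (fun y => (WinvM m (y + 1) + m - WinvM m y) % m)
      (Finset.range (m - 1)) := by
    intro a ha b hb hab
    simp only [Finset.coe_range, Set.mem_Iio] at ha hb
    simp only [] at hab
    rw [winv_diff m a ⟨k, hk⟩ ha, winv_diff m b ⟨k, hk⟩ hb] at hab
    split_ifs at hab <;> omega
  refine ⟨hinj, ?_⟩
  apply Finset.eq_of_subset_of_card_le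
  · intro x hx
    simp only [Finset.mem_image] at hx
    obtain ⟨y, hy, hxy⟩ := hx
    rw [Finset.mem_range] at hy
    rw [winv_diff m y ⟨k, hk⟩ hy] at hxy
    rw [Finset.mem_Icc]
    split at hxy <;> omega
  · rw [Finset.card_image_of_injOn hinj, Finset.card_range, Nat.card_Icc]
    omega
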